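/- Two Gauss codes w and w' on n letters are unorientedly equivalent if and only if there exists an integer k ≥ 0 such that proj^LP(w') = (shift^LP)^k(proj^LP(w)) or proj^LP(w') = (shift^LP)^k(rev^LP(proj^LP(w))). -/

import Mathlib

/-- A Gauss code on `n` letters: a bijection from the `2*n` positions to
letters paired with a side (`false` = L, `true` = R). -/
abbrev GaussCode (n : ℕ) := Fin (2 * n) ≃ Fin n × Bool

instance (n : ℕ) [NeZero n] : NeZero (2 * n) := ⟨by have := NeZero.ne n; omega⟩

namespace GaussCode

variable {n : ℕ}

/-- `π_*(w)`: relabel the letters by the permutation `π`. -/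
def permAct (π : Equiv.Perm (Fin n)) (w : GaussCode n) : GaussCode n :=
  w.trans (π.prodCongr (Equiv.refl Bool))

open Fin.NatCast in
/-- `shift[m](w)`: the code whose entry at position `i` is the entry of `w` at
position `i + m` (mod `2n`). -/
def shift [NeZero n] (m : ℕ) (w : GaussCode n) : GaussCode n :=
  (Equiv.addRight ((m : Fin (2 * n)))).trans w

/-- `rev(w)`: the code whose entry at position `i` is the entry of `w` at
position `2n - 1 - i`. -/
def rev (w : GaussCode n) : GaussCode n :=
  (Fin.revPerm).trans w

/-- A Gauss code is left preferred if its `L`-entries appear in the order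
`(1,L), (2,L), …, (n,L)` and its entry at position `0` is `(1,L)`. -/
def IsLeftPreferred [NeZero n] (w : GaussCode n) : Prop :=
  StrictMono (fun j : Fin n => w.symm (j, false)) ∧ w 0 = (0, false)

/-- `proj^LP(w)`: relabel letters in the order of appearance of their `L`-entries,
then rotate so that `(1,L)` is at position `0`. -/
def projLP [NeZero n] (w : GaussCode n) : GaussCode n :=
  let π : Equiv.Perm (Fin n) := (Tuple.sort (fun j : Fin n => w.symm (j, false)))⁻¹
  let w' := permAct π w
  shift ((w'.symm ((0 : Fin n), false)).val) w'

/-- `shift^LP(w) := proj^LP(shift[1](w))`. -/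
def shiftLP [NeZero n] (w : GaussCode n) : GaussCode n :=
  projLP (shift 1 w)

/-- `rev^LP(w) := proj^LP(rev(w))`. -/
def revLP [NeZero n] (w : GaussCode n) : GaussCode n :=
  projLP (rev w)

/-- The value of an entry in the order `(1,L) < (1,R) < (2,L) < (2,R) < …`. -/
def entryKey (e : Fin n × Bool) : ℕ :=
  2 * e.1.val + (if e.2 then 1 else 0)

/-- Lexicographic (strict) order on Gauss codes, comparing entries position by
position in the order `(1,L) < (1,R) < (2,L) < (2,R) < …`. -/
def lexLt (w w' : GaussCode n) : Prop :=
  ∃ i : Fin (2 * n), (∀ k, k < i → w k = w' k) ∧ entryKey (w i) < entryKey (w' i)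

/-- Lexicographic order on Gauss codes. -/
def lexLe (w w' : GaussCode n) : Prop :=
  w = w' ∨ lexLt w w'

/-- A left preferred Gauss code is left canonical if it is the smallest element
of its `shift^LP`-orbit `{w, shift^LP(w), …, (shift^LP)^{n-1}(w)}`. -/
def IsLeftCanonical [NeZero n] (w : GaussCode n) : Prop :=
  IsLeftPreferred w ∧ ∀ k < n, lexLe w (shiftLP^[k] w)

/-- `proj^LC(w)`: the smallest element of the `shift^LP`-orbit of `proj^LP(w)`. -/
noncomputable def projLC [NeZero n] (w : GaussCode n) : GaussCode n :=
  letI := Classical.propDecidable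
  if h : ∃ v : GaussCode n, (∃ k < n, v = shiftLP^[k] (projLP w)) ∧
      ∀ k < n, lexLe v (shiftLP^[k] (projLP w))
  then h.choose else projLP w

/-- `rev^LC(w) := proj^LC(rev(w))`. -/
noncomputable def revLC [NeZero n] (w : GaussCode n) : GaussCode n :=
  projLC (rev w)

/-- Oriented equivalence of Gauss codes: `w' = shift[m](π_*(w))` for some
permutation `π` and integer `m`. -/
def OrientedEquiv [NeZero n] (w w' : GaussCode n) : Prop :=
  ∃ (π : Equiv.Perm (Fin n)) (m : ℕ), w' = shift m (permAct π w)

/-- Unoriented equivalence: `w` is orientedly equivalent to `w'` or to `rev(w')`. -/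
def UnorientedEquiv [NeZero n] (w w' : GaussCode n) : Prop :=
  OrientedEquiv w w' ∨ OrientedEquiv w (rev w')

/-- A Gauss code is 1-reducible if two cyclically adjacent entries share the same letter. -/
def OneReducible [NeZero n] (w : GaussCode n) : Prop :=
  ∃ i : Fin (2 * n), (w i).1 = (w (i + 1)).1

/-- A Gauss code is 2-reducible (cyclically, with `L = false`, `R = true`). -/
def TwoReducible [NeZero n] (w : GaussCode n) : Prop :=
  ∃ (i i' : Fin (2 * n)) (j k : Fin n), j ≠ k ∧
    ((w i = (j, false) ∧ w (i + 1) = (k, true) ∧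
        w i' = (j, true) ∧ w (i' + 1) = (k, false)) ∨
     (w i = (j, false) ∧ w (i + 1) = (k, true) ∧
        w i' = (k, false) ∧ w (i' + 1) = (j, true)) ∨
     (w i = (j, true) ∧ w (i + 1) = (k, false) ∧
        w i' = (k, true) ∧ w (i' + 1) = (j, false)))

/-- A Gauss code is minimal if it is neither 1-reducible nor 2-reducible. -/
def IsMinimal [NeZero n] (w : GaussCode n) : Prop :=
  ¬ OneReducible w ∧ ¬ TwoReducible w

/-- `σ_w`: the involution of positions sending each position to the unique other
position carrying the same letter. -/
def sigmaMap (w : GaussCode n) : Fin (2 * n) → Fin (2 * n) :=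
  fun i => w.symm ((w i).1, !(w i).2)

/-- `h_w`: the side (`false` = L, `true` = R) of the entry at each position. -/
def hMap (w : GaussCode n) : Fin (2 * n) → Bool :=
  fun i => (w i).2

end GaussCode


set_option linter.unusedSectionVars false
set_option linter.unusedVariables false

namespace GaussCode

open Fin.NatCast

variable {n : ℕ} [NeZero n]

lemma permAct_symm_apply (π : Equiv.Perm (Fin n)) (w : GaussCode n) (j : Fin n) (b : Bool) :
    (permAct π w).symm (j, b) = w.symm (π⁻¹ j, b) := rfl
lemma gc_ext {w w' : GaussCode n} (h : ∀ i, w i = w' i) : w = w' := Equiv.ext h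

/-- Positions of the `L` entries. -/
def fL (w : GaussCode n) : Fin n → Fin (2*n) := fun j => w.symm (j, false)

lemma fL_inj (w : GaussCode n) : Function.Injective (fL w) := fun a b h => by
  simpa [fL, Prod.ext_iff] using congrArg w h

lemma sort_eq_of_strictMono {f : Fin n → Fin (2*n)} (hf : Function.Injective f)
    (σ : Equiv.Perm (Fin n)) (h : StrictMono (f ∘ σ)) : Tuple.sort f = σ := by
  have h1 : StrictMono (f ∘ Tuple.sort f) :=
    (Tuple.monotone_sort f).strictMono_of_injective (hf.comp (Equiv.injective _))
  have hr : Set.range (f ∘ ⇑(Tuple.sort f)) = Set.range (f ∘ ⇑σ) := by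
    rw [(Equiv.surjective _).range_comp, (Equiv.surjective _).range_comp]
  have h2 : f ∘ ⇑(Tuple.sort f) = f ∘ ⇑σ := by
    haveI : WellFoundedLT (Fin n) := inferInstance
    exact (StrictMono.range_inj h1 h).1 hr
  apply Equiv.ext
  intro x
  exact hf (congrFun h2 x)

lemma strictMono_fL_sort (w : GaussCode n) : StrictMono (fL w ∘ Tuple.sort (fL w)) :=
  (Tuple.monotone_sort _).strictMono_of_injective ((fL_inj w).comp (Equiv.injective _))

/-- Position of the first `L` entry. -/
def mPos (w : GaussCode n) : Fin (2*n) := fL w (Tuple.sort (fL w) 0)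

lemma mPos_le (w : GaussCode n) (j : Fin n) : mPos w ≤ fL w j := by
  have h0 : (0 : Fin n) ≤ (Tuple.sort (fL w))⁻¹ j := Fin.zero_le _
  have := Tuple.monotone_sort (fL w) h0
  simpa [mPos, Function.comp] using this

lemma projLP_def (w : GaussCode n) :
    projLP w = shift (mPos w).val (permAct (Tuple.sort (fL w))⁻¹ w) := by
  show shift ((permAct _ w).symm ((0 : Fin n), false)).val (permAct _ w) = _
  rw [permAct_symm_apply, inv_inv]
  rfl

lemma fL_projLP (w : GaussCode n) (j : Fin n) :
    fL (projLP w) j = fL w (Tuple.sort (fL w) j) - mPos w := by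
  rw [projLP_def]
  show (shift _ _).symm (j, false) = _
  rw [shift]
  simp [Equiv.symm_trans_apply, permAct_symm_apply, fL, Fin.cast_val_eq_self, sub_eq_add_neg]

lemma n_pos : 0 < n := Nat.pos_of_ne_zero (NeZero.ne _)

lemma fin_sub_val (a b : Fin (2*n)) (h : b.val ≤ a.val) : (a - b).val = a.val - b.val := by
  have hn := @n_pos n _
  have ha := a.isLt
  rw [Fin.sub_def]
  simp only
  have h2 : 2*n - b.val + a.val = (a.val - b.val) + 2*n := by omega
  rw [h2, Nat.add_mod_right, Nat.mod_eq_of_lt (by omega)]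

theorem projLP_isLeftPreferred (w : GaussCode n) : IsLeftPreferred (projLP w) := by
  have hfL : ∀ j, fL (projLP w) j = fL w (Tuple.sort (fL w) j) - mPos w := fL_projLP w
  have hsm := strictMono_fL_sort w
  constructor
  · intro a b hab
    show fL (projLP w) a < fL (projLP w) b
    rw [hfL, hfL]
    have h1 : mPos w ≤ fL w (Tuple.sort (fL w) a) := mPos_le w _
    have h2 : fL w (Tuple.sort (fL w) a) < fL w (Tuple.sort (fL w) b) := hsm hab
    rw [Fin.lt_def, fin_sub_val _ _ h1, fin_sub_val _ _ (le_trans h1 h2.le)]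
    have := Fin.lt_def.1 h2
    have := Fin.le_def.1 h1
    omega
  · have h0 : fL (projLP w) 0 = 0 := by
      rw [hfL]; exact sub_self _
    have : (projLP w).symm ((0 : Fin n), false) = 0 := h0
    rw [← this, Equiv.apply_symm_apply]

theorem projLP_eq_self {w : GaussCode n} (h : IsLeftPreferred w) : projLP w = w := by
  have hs : Tuple.sort (fL w) = 1 := by
    apply sort_eq_of_strictMono (fL_inj w)
    exact h.1
  have hm : mPos w = 0 := by
    rw [mPos, hs]
    show fL w 0 = 0
    rw [fL, show ((0 : Fin n), false) = w 0 from h.2.symm, Equiv.symm_apply_apply]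
  rw [projLP_def, hs, hm, inv_one]
  show shift (0:ℕ) (permAct 1 w) = w
  apply gc_ext; intro i
  simp [shift, permAct]

theorem projLP_permAct (π : Equiv.Perm (Fin n)) (w : GaussCode n) :
    projLP (permAct π w) = projLP w := by
  have hfL : fL (permAct π w) = fL w ∘ ⇑π⁻¹ := by
    funext j; rw [fL, permAct_symm_apply]; rfl
  have hs : Tuple.sort (fL (permAct π w)) = π * Tuple.sort (fL w) := by
    apply sort_eq_of_strictMono
    · rw [hfL]; exact (fL_inj w).comp (Equiv.injective _)
    · have : fL (permAct π w) ∘ ⇑(π * Tuple.sort (fL w)) = fL w ∘ ⇑(Tuple.sort (fL w)) := by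
        funext j; rw [hfL]; simp [Equiv.Perm.mul_apply]
      rw [this]; exact strictMono_fL_sort w
  have hm : mPos (permAct π w) = mPos w := by
    rw [mPos, mPos, hs, hfL]
    simp [Equiv.Perm.mul_apply]
  rw [projLP_def, projLP_def, hs, hm]
  congr 1
  show permAct _ (permAct π w) = _
  have : permAct (π * Tuple.sort (fL w))⁻¹ (permAct π w)
      = permAct ((π * Tuple.sort (fL w))⁻¹ * π) w := by
    apply gc_ext; intro i; rfl
  rw [this]
  congr 1
  group


lemma val_one_2n : ((1 : Fin (2*n))).val = 1 := by
  have := @n_pos n _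
  have h : (1 : Fin (2*n)).val = 1 % (2*n) := rfl
  rw [h, Nat.mod_eq_of_lt (by omega)]

lemma shift_apply (m : ℕ) (w : GaussCode n) (i : Fin (2*n)) : shift m w i = w (i + (m : Fin (2*n))) := rfl

lemma fL_shift (m : ℕ) (w : GaussCode n) (j : Fin n) :
    fL (shift m w) j = fL w j - (m : Fin (2*n)) := by
  rw [fL, fL, shift]
  simp [Equiv.symm_trans_apply, sub_eq_add_neg]

lemma shift_shift (a b : ℕ) (w : GaussCode n) : shift a (shift b w) = shift (a + b) w := by
  apply gc_ext; intro i; simp [shift_apply, Nat.cast_add, add_assoc]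

lemma shift_zero (w : GaussCode n) : shift 0 w = w := by
  apply gc_ext; intro i; simp [shift_apply]

lemma shift_permAct (m : ℕ) (π : Equiv.Perm (Fin n)) (w : GaussCode n) :
    shift m (permAct π w) = permAct π (shift m w) := rfl

lemma shift_congr {a b : ℕ} (h : (a : Fin (2*n)) = (b : Fin (2*n))) (w : GaussCode n) :
    shift a w = shift b w := by unfold shift; rw [h]

/-- step over an `R` entry at position `0`. -/
theorem projLP_shift_one {w : GaussCode n} (h : (w 0).2 = true) :
    projLP (shift 1 w) = projLP w := by
  have hpos : ∀ j, 1 ≤ (fL w j).val := by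
    intro j
    rcases Nat.eq_zero_or_pos (fL w j).val with h0 | h0
    · exfalso
      have : fL w j = 0 := Fin.ext h0
      have : w 0 = (j, false) := by rw [← this, fL, Equiv.apply_symm_apply]
      rw [this] at h; simp at h
    · omega
  have hone : ((1:ℕ) : Fin (2*n)) = (1 : Fin (2*n)) := Nat.cast_one
  have hfL : ∀ j, fL (shift 1 w) j = fL w j - 1 := by
    intro j; rw [fL_shift, hone]
  have hval : ∀ j, (fL (shift 1 w) j).val = (fL w j).val - 1 := by
    intro j; rw [hfL, fin_sub_val _ _ (by rw [val_one_2n]; exact hpos j), val_one_2n]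
  have hs : Tuple.sort (fL (shift 1 w)) = Tuple.sort (fL w) := by
    apply sort_eq_of_strictMono
    · intro a b hab
      have := hpos a; have := hpos b
      have h2 := congrArg w (hab)
      -- injectivity of fL (shift 1 w)
      have : fL w a - 1 = fL w b - 1 := by rw [← hfL, ← hfL, hab]
      have hv : (fL w a).val = (fL w b).val := by
        have := congrArg Fin.val this
        rw [fin_sub_val _ _ (by rw [val_one_2n]; exact hpos a),
            fin_sub_val _ _ (by rw [val_one_2n]; exact hpos b), val_one_2n] at this
        have := hpos a; have := hpos b; omega
      exact fL_inj w (Fin.ext hv)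
    · intro a b hab
      have h2 := Fin.lt_def.1 (strictMono_fL_sort w hab)
      have ea := hval (Tuple.sort (fL w) a)
      have eb := hval (Tuple.sort (fL w) b)
      have := hpos (Tuple.sort (fL w) a); have := hpos (Tuple.sort (fL w) b)
      simp only [Function.comp_apply, Fin.lt_def] at *
      omega
  have hm : mPos (shift 1 w) = mPos w - 1 := by
    rw [mPos, mPos, hs, hfL]
  have hmpos : 1 ≤ (mPos w).val := hpos _
  rw [projLP_def, projLP_def, hs, hm]
  rw [show permAct (Tuple.sort (fL w))⁻¹ (shift 1 w)
      = shift 1 (permAct (Tuple.sort (fL w))⁻¹ w) from rfl]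
  rw [shift_shift]
  apply shift_congr
  rw [fin_sub_val _ _ (by rw [val_one_2n]; exact hmpos), val_one_2n]
  rw [show (mPos w).val - 1 + 1 = (mPos w).val by omega]

/-- stepping from a left position. -/
theorem shiftLP_projLP {w : GaussCode n} (h : (w 0).2 = false) :
    shiftLP (projLP w) = projLP (shift 1 w) := by
  have hm : mPos w = 0 := by
    have h1 : fL w (w 0).1 = 0 := by
      rw [fL, show ((w 0).1, false) = w 0 from (Prod.ext rfl h.symm), Equiv.symm_apply_apply]
    have := mPos_le w (w 0).1
    rw [h1] at this
    exact le_antisymm this (Fin.zero_le _)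
  have hproj : projLP w = permAct (Tuple.sort (fL w))⁻¹ w := by
    rw [projLP_def, hm]
    show shift (0:ℕ) _ = _
    exact shift_zero _
  rw [shiftLP, hproj, shift_permAct, projLP_permAct]

lemma exL (w : GaussCode n) (j : ℕ) : ∃ p, (w (((j + p : ℕ) : Fin (2*n)))).2 = false := by
  refine ⟨((w.symm ((0:Fin n), false)) - (j : Fin (2*n))).val, ?_⟩
  have : ((j + ((w.symm ((0:Fin n), false)) - (j : Fin (2*n))).val : ℕ) : Fin (2*n))
      = w.symm ((0:Fin n), false) := by
    rw [Nat.cast_add, Fin.cast_val_eq_self]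
    exact add_sub_cancel _ _
  rw [this, Equiv.apply_symm_apply]

/-- Distance to the first `L` entry at position `≥ j`. -/
def dL (w : GaussCode n) (j : ℕ) : ℕ := Nat.find (exL w j)

lemma dL_spec (w : GaussCode n) (j : ℕ) : (w (((j + dL w j : ℕ) : Fin (2*n)))).2 = false :=
  Nat.find_spec (exL w j)

lemma dL_min (w : GaussCode n) {j q : ℕ} (h : q < dL w j) : (w (((j + q : ℕ) : Fin (2*n)))).2 = true := by
  have := Nat.find_min (exL w j) h
  simpa using this

lemma dL_lt (w : GaussCode n) (j : ℕ) : dL w j < 2*n := by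
  have h := Nat.find_min' (exL w j)
    (m := ((w.symm ((0:Fin n), false)) - (j : Fin (2*n))).val) (by
      have : ((j + ((w.symm ((0:Fin n), false)) - (j : Fin (2*n))).val : ℕ) : Fin (2*n))
          = w.symm ((0:Fin n), false) := by
        rw [Nat.cast_add, Fin.cast_val_eq_self]
        exact add_sub_cancel _ _
      rw [this, Equiv.apply_symm_apply])
  exact lt_of_le_of_lt h (Fin.is_lt _)

lemma shift_at_zero (w : GaussCode n) (m : ℕ) : shift m w 0 = w (m : Fin (2*n)) := by
  rw [shift_apply, zero_add]

theorem projLP_shift_run (w : GaussCode n) (j : ℕ) :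
    ∀ p : ℕ, (∀ q < p, (w (((j + q : ℕ) : Fin (2*n)))).2 = true) →
      projLP (shift (j+p) w) = projLP (shift j w) := by
  intro p
  induction p with
  | zero => intro _; rfl
  | succ p ih =>
    intro h
    have h0 : ((shift (j+p) w) 0).2 = true := by
      rw [shift_at_zero]; exact h p (Nat.lt_succ_self p)
    have e1 : shift (j+(p+1)) w = shift 1 (shift (j+p) w) := by
      rw [shift_shift]; exact shift_congr (by rw [show 1 + (j+p) = j + (p+1) by omega]) w
    rw [e1, projLP_shift_one h0]
    exact ih (fun q hq => h q (by omega))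

theorem projLP_shift_firstL (w : GaussCode n) (j : ℕ) :
    projLP (shift j w) = projLP (shift (j + dL w j) w) :=
  (projLP_shift_run w j (dL w j) (fun q hq => dL_min w hq)).symm

theorem shiftLP_step (w : GaussCode n) (j : ℕ) :
    shiftLP (projLP (shift j w)) = projLP (shift (j + dL w j + 1) w) := by
  rw [projLP_shift_firstL w j]
  have h0 : ((shift (j + dL w j) w) 0).2 = false := by
    rw [shift_at_zero]; exact dL_spec w j
  rw [shiftLP_projLP h0, shift_shift]
  exact congrArg projLP (shift_congr (a := 1 + (j + dL w j)) (b := j + dL w j + 1)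
    (by rw [Nat.add_comm 1 (j + dL w j)]) w)

/-- The position-jumping map. -/
def gP (w : GaussCode n) (j : ℕ) : ℕ := j + dL w j + 1

theorem iter_shiftLP (w : GaussCode n) (k : ℕ) :
    shiftLP^[k] (projLP w) = projLP (shift ((gP w)^[k] 0) w) := by
  induction k with
  | zero =>
    simp only [Function.iterate_zero, id]
    rw [shift_zero]
  | succ k ih =>
    rw [Function.iterate_succ_apply', ih, Function.iterate_succ_apply']
    exact shiftLP_step w _

/-- The sequence of `L` positions visited. -/
def aP (w : GaussCode n) (k : ℕ) : ℕ := (gP w)^[k] 0 + dL w ((gP w)^[k] 0)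

lemma aP_isL (w : GaussCode n) (k : ℕ) : (w ((aP w k : ℕ) : Fin (2*n))).2 = false :=
  dL_spec w _

lemma aP_succ (w : GaussCode n) (k : ℕ) :
    aP w (k+1) = (aP w k + 1) + dL w (aP w k + 1) := by
  rw [aP, aP, Function.iterate_succ_apply']
  rfl

lemma aP_strictMono (w : GaussCode n) : StrictMono (aP w) := by
  apply strictMono_nat_of_lt_succ
  intro k
  rw [aP_succ]
  omega

lemma aP_zero_lt (w : GaussCode n) : aP w 0 < 2*n := by
  have := dL_lt w 0
  simp only [aP, Function.iterate_zero, id, zero_add]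
  exact this

/-- coverage: every `L` position at least `aP w 0` is visited. -/
lemma aP_coverage (w : GaussCode n) (p : ℕ) (h0 : aP w 0 ≤ p)
    (hL : (w ((p : ℕ) : Fin (2*n))).2 = false) : ∃ k, p = aP w k := by
  have hub : ∃ m, p < aP w m := ⟨p + 1, lt_of_lt_of_le (Nat.lt_succ_self p)
    ((aP_strictMono w).le_apply)⟩
  have hKspec : p < aP w (Nat.find hub) := Nat.find_spec hub
  have hKne : Nat.find hub ≠ 0 := by
    intro h
    rw [h] at hKspec
    omega
  obtain ⟨k, hKk⟩ := Nat.exists_eq_succ_of_ne_zero hKne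
  rw [hKk] at hKspec
  simp only [Nat.succ_eq_add_one] at hKspec
  have hk : aP w k ≤ p := by
    by_contra hc
    exact Nat.find_min hub (m := k) (by omega) (by omega)
  rcases Nat.eq_or_lt_of_le hk with he | hlt
  · exact ⟨k, he.symm⟩
  · exfalso
    have hq : p = (aP w k + 1) + (p - aP w k - 1) := by omega
    have hqlt : p - aP w k - 1 < dL w (aP w k + 1) := by
      have := aP_succ w k
      omega
    have := dL_min w (j := aP w k + 1) hqlt
    rw [← hq] at this
    rw [hL] at this
    exact Bool.false_ne_true this

theorem exists_iter (w : GaussCode n) (j : ℕ) :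
    ∃ k, projLP (shift j w) = shiftLP^[k] (projLP w) := by
  have e1 : shift j w = shift (j + 2*n) w := by
    apply gc_ext; intro i
    rw [shift_apply, shift_apply, Nat.cast_add, Fin.natCast_self, add_zero]
  set J := j + 2*n with hJ
  set p := J + dL w J with hp
  have e2 : projLP (shift j w) = projLP (shift p w) := by
    rw [e1, projLP_shift_firstL w J]
  have hL : (w ((p : ℕ) : Fin (2*n))).2 = false := dL_spec w J
  have h0 : aP w 0 ≤ p := by
    have := aP_zero_lt w
    omega
  obtain ⟨k, hk⟩ := aP_coverage w p h0 hL
  refine ⟨k, ?_⟩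
  rw [iter_shiftLP, projLP_shift_firstL w ((gP w)^[k] 0), e2, hk]
  rfl


lemma permAct_apply (π : Equiv.Perm (Fin n)) (w : GaussCode n) (i : Fin (2*n)) :
    permAct π w i = (π (w i).1, (w i).2) := rfl

lemma permAct_permAct (a b : Equiv.Perm (Fin n)) (w : GaussCode n) :
    permAct a (permAct b w) = permAct (a * b) w := by
  apply gc_ext; intro i; simp [permAct_apply]

lemma permAct_one (w : GaussCode n) : permAct 1 w = w := by
  apply gc_ext; intro i; simp [permAct_apply]

lemma rev_apply (w : GaussCode n) (i : Fin (2*n)) : rev w i = w i.rev := rfl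

lemma fin_rev_eq (x : Fin (2*n)) : x.rev = -1 - x := by
  have hn := @n_pos n _
  have hx := x.isLt
  apply Fin.ext
  rw [Fin.val_rev, Fin.sub_def, Fin.neg_def]
  simp only [val_one_2n]
  have h1 : (2*n - 1) % (2*n) = 2*n - 1 := Nat.mod_eq_of_lt (by omega)
  rw [h1]
  have h2 : 2*n - x.val + (2*n-1) = (2*n - 1 - x.val) + 2*n := by omega
  rw [h2, Nat.add_mod_right, Nat.mod_eq_of_lt (by omega)]
  omega

lemma rev_rev_gc (w : GaussCode n) : rev (rev w) = w := by
  apply gc_ext; intro i; simp [rev_apply]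

lemma rev_permAct (π : Equiv.Perm (Fin n)) (w : GaussCode n) :
    rev (permAct π w) = permAct π (rev w) := rfl

lemma rev_shift (m : ℕ) (w : GaussCode n) :
    rev (shift m w) = shift ((-(m : Fin (2*n))).val) (rev w) := by
  apply gc_ext; intro i
  rw [rev_apply, shift_apply, shift_apply, rev_apply, Fin.cast_val_eq_self]
  congr 1
  rw [fin_rev_eq, fin_rev_eq]
  abel

lemma orientedEquiv_refl (w : GaussCode n) : OrientedEquiv w w :=
  ⟨1, 0, by rw [permAct_one, shift_zero]⟩

lemma orientedEquiv_symm {u v : GaussCode n} (h : OrientedEquiv u v) : OrientedEquiv v u := by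
  obtain ⟨π, m, rfl⟩ := h
  refine ⟨π⁻¹, ((-(m : Fin (2*n))).val), ?_⟩
  rw [shift_permAct m π u, permAct_permAct, inv_mul_cancel, permAct_one, shift_shift]
  rw [shift_congr (b := 0) (by
    rw [Nat.cast_add, Fin.cast_val_eq_self, neg_add_cancel, Nat.cast_zero]) u]
  rw [shift_zero]

lemma orientedEquiv_trans {u v x : GaussCode n}
    (h1 : OrientedEquiv u v) (h2 : OrientedEquiv v x) : OrientedEquiv u x := by
  obtain ⟨π, m, rfl⟩ := h1
  obtain ⟨π', m', rfl⟩ := h2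
  refine ⟨π' * π, m' + m, ?_⟩
  rw [shift_permAct m π u, permAct_permAct, ← shift_shift, shift_permAct m (π' * π) u]

lemma orientedEquiv_rev {u v : GaussCode n} (h : OrientedEquiv u v) :
    OrientedEquiv (rev u) (rev v) := by
  obtain ⟨π, m, rfl⟩ := h
  exact ⟨π, ((-(m : Fin (2*n))).val), by rw [rev_shift, rev_permAct]⟩

lemma oriented_projLP (w : GaussCode n) : OrientedEquiv w (projLP w) :=
  ⟨(Tuple.sort (fL w))⁻¹, (mPos w).val, projLP_def w⟩

theorem orientedEquiv_iff (u v : GaussCode n) :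
    OrientedEquiv u v ↔ ∃ k, projLP v = shiftLP^[k] (projLP u) := by
  constructor
  · rintro ⟨π, m, rfl⟩
    rw [shift_permAct, projLP_permAct]
    exact exists_iter u m
  · rintro ⟨k, hk⟩
    have h1 : OrientedEquiv u (projLP v) := by
      rw [hk, iter_shiftLP]
      refine ⟨(Tuple.sort (fL (shift ((gP u)^[k] 0) u)))⁻¹,
        (mPos (shift ((gP u)^[k] 0) u)).val + (gP u)^[k] 0, ?_⟩
      rw [projLP_def, ← shift_permAct, shift_shift]
    exact orientedEquiv_trans h1 (orientedEquiv_symm (oriented_projLP v))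

theorem orientedEquiv_rev_iff (w w' : GaussCode n) :
    OrientedEquiv (rev (projLP w)) w' ↔ OrientedEquiv w (rev w') := by
  constructor
  · intro h
    have h2 := orientedEquiv_rev h
    rw [rev_rev_gc] at h2
    exact orientedEquiv_trans (oriented_projLP w) h2
  · intro h
    have h1 : OrientedEquiv (projLP w) (rev w') :=
      orientedEquiv_trans (orientedEquiv_symm (oriented_projLP w)) h
    have h2 := orientedEquiv_rev h1
    rw [rev_rev_gc] at h2
    exact h2

end GaussCode

open GaussCode in
/-- two Gauss codes are unorientedly equivalent iff the left preferred
projection of one lies in the `shift^LP`-orbit of the projection of the other or of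
its `rev^LP`. -/
theorem stmt7 (n : ℕ) [NeZero n] (w w' : GaussCode n) :
    UnorientedEquiv w w' ↔
      ∃ k : ℕ, projLP w' = shiftLP^[k] (projLP w) ∨
        projLP w' = shiftLP^[k] (revLP (projLP w)) := by
  rw [UnorientedEquiv]
  rw [show (∃ k : ℕ, projLP w' = shiftLP^[k] (projLP w) ∨
        projLP w' = shiftLP^[k] (revLP (projLP w))) ↔
      ((∃ k : ℕ, projLP w' = shiftLP^[k] (projLP w)) ∨
        (∃ k : ℕ, projLP w' = shiftLP^[k] (revLP (projLP w)))) from exists_or]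
  rw [← orientedEquiv_iff w w']
  have h2 : (∃ k : ℕ, projLP w' = shiftLP^[k] (revLP (projLP w))) ↔
      OrientedEquiv w (rev w') := by
    rw [show revLP (projLP w) = projLP (rev (projLP w)) from rfl]
    rw [← orientedEquiv_iff (rev (projLP w)) w']
    exact orientedEquiv_rev_iff w w'
  rw [h2]
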